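/- Let F be a strongly regular CDF on [0,1] (continuously differentiable density f > 0, f nondecreasing and log-concave), with ψ(θ) = θ − (1 − F(θ))/f(θ) and W(θ) = (1 − F(θ))ψ′(θ) − f(θ)ψ(θ). Suppose θ* ∈ (0,1) is a monopoly threshold, i.e. ψ(θ*) = 0 (equivalently θ*·f(θ*) = 1 − F(θ*)). Then: (i) W(θ*) ≥ 2(1 − F(θ*)) > 1 − F(θ*); and (ii) every k ∈ [0,1) with W(k) ≤ 1 − F(k) satisfies k > θ*. In particular, every admissible threshold on the fairness-efficiency frontier strictly exceeds the unregulated monopoly threshold (supra-pricing). -/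

import Mathlib

/-- **Supra-pricing.** For a strongly regular CDF `F` on `[0,1]` with monopoly
threshold `θ*` (where `ψ(θ*) = 0`): (i) `W(θ*) ≥ 2(1 - F θ*) > 1 - F θ*`; and (ii) every
`k ∈ [0,1)` with `W(k) ≤ 1 - F k` satisfies `k > θ*`, so every admissible frontier threshold
strictly exceeds the unregulated monopoly threshold. -/
theorem supra_pricing_of_stronglyRegular
    (F f f' : ℝ → ℝ)
    (hF0 : F 0 = 0) (hF1 : F 1 = 1)
    (hFd : ∀ θ ∈ Set.Icc (0:ℝ) 1, HasDerivAt F (f θ) θ)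
    (hfd : ∀ θ ∈ Set.Icc (0:ℝ) 1, HasDerivAt f (f' θ) θ)
    (hf'cont : ContinuousOn f' (Set.Icc 0 1))
    (hfpos : ∀ θ ∈ Set.Icc (0:ℝ) 1, 0 < f θ)
    (hfmono : MonotoneOn f (Set.Icc 0 1))
    (hlogconc : AntitoneOn (fun θ => f' θ / f θ) (Set.Icc 0 1))
    (ψ : ℝ → ℝ) (hψ : ∀ θ, ψ θ = θ - (1 - F θ) / f θ)
    (W : ℝ → ℝ) (hW : ∀ θ, W θ = (1 - F θ) * deriv ψ θ - f θ * ψ θ)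
    (θs : ℝ) (hθs : θs ∈ Set.Ioo (0:ℝ) 1) (hmonopoly : ψ θs = 0) :
    (2 * (1 - F θs) ≤ W θs ∧ 1 - F θs < 2 * (1 - F θs)) ∧
    (∀ k ∈ Set.Ico (0:ℝ) 1, W k ≤ 1 - F k → θs < k) := by
  have hfne : ∀ θ ∈ Set.Icc (0:ℝ) 1, f θ ≠ 0 := fun θ hθ => (hfpos θ hθ).ne'
  -- f' is nonnegative on [0,1)
  have hf'nonneg : ∀ θ ∈ Set.Ico (0:ℝ) 1, 0 ≤ f' θ := by
    intro θ hθ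
    have hθI : θ ∈ Set.Icc (0:ℝ) 1 := ⟨hθ.1, le_of_lt hθ.2⟩
    have hd : HasDerivWithinAt f (f' θ) (Set.Ioi θ) θ := (hfd θ hθI).hasDerivWithinAt
    have hslope := hasDerivWithinAt_iff_tendsto_slope.mp hd
    rw [Set.diff_singleton_eq_self (by simp)] at hslope
    refine ge_of_tendsto hslope ?_
    filter_upwards [eventually_nhdsWithin_of_eventually_nhds
      (eventually_lt_nhds hθ.2), self_mem_nhdsWithin] with x hx1 hx2
    have hx2' : θ < x := hx2
    have hxI : x ∈ Set.Icc (0:ℝ) 1 := ⟨le_trans hθ.1 (le_of_lt hx2), le_of_lt hx1⟩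
    have hfx : f θ ≤ f x := hfmono hθI hxI (le_of_lt hx2)
    rw [slope_def_field]
    exact div_nonneg (by linarith) (by linarith [hx2'])
  -- F is strictly monotone on [0,1]
  have hFcont : ContinuousOn F (Set.Icc (0:ℝ) 1) :=
    fun θ hθ => (hFd θ hθ).continuousAt.continuousWithinAt
  have hFstrict : StrictMonoOn F (Set.Icc (0:ℝ) 1) := by
    refine strictMonoOn_of_deriv_pos (convex_Icc 0 1) hFcont ?_
    intro x hx
    rw [interior_Icc] at hx
    have hxI : x ∈ Set.Icc (0:ℝ) 1 := ⟨le_of_lt hx.1, le_of_lt hx.2⟩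
    rw [(hFd x hxI).deriv]
    exact hfpos x hxI
  have hFle1 : ∀ θ ∈ Set.Icc (0:ℝ) 1, F θ ≤ 1 := by
    intro θ hθ
    have := hFstrict.monotoneOn hθ (Set.right_mem_Icc.mpr zero_le_one) hθ.2
    linarith [hF1]
  have hFlt1 : ∀ θ ∈ Set.Ico (0:ℝ) 1, F θ < 1 := by
    intro θ hθ
    have := hFstrict ⟨hθ.1, le_of_lt hθ.2⟩ (Set.right_mem_Icc.mpr zero_le_one) hθ.2
    linarith [hF1]
  -- derivative of ψ
  have hψeq : ψ = fun x => x - (1 - F x) / f x := funext hψ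
  have hψd : ∀ θ ∈ Set.Icc (0:ℝ) 1,
      HasDerivAt ψ (2 + (1 - F θ) * f' θ / (f θ) ^ 2) θ := by
    intro θ hθ
    have h1 : HasDerivAt (fun x => (1 - F x) / f x)
        (((0 - f θ) * f θ - (1 - F θ) * f' θ) / (f θ) ^ 2) θ :=
      (((hasDerivAt_const θ (1:ℝ)).sub (hFd θ hθ)).div (hfd θ hθ) (hfne θ hθ))
    have h2 : HasDerivAt (fun x => x - (1 - F x) / f x)
        (1 - ((0 - f θ) * f θ - (1 - F θ) * f' θ) / (f θ) ^ 2) θ := (hasDerivAt_id θ).sub h1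
    rw [hψeq]
    convert h2 using 1
    have := hfne θ hθ
    field_simp
    ring
  have hψderiv : ∀ θ ∈ Set.Icc (0:ℝ) 1,
      deriv ψ θ = 2 + (1 - F θ) * f' θ / (f θ) ^ 2 := fun θ hθ => (hψd θ hθ).deriv
  -- key bound : for θ in [0,1), W θ ≥ 2 (1 - F θ) - f θ * ψ θ
  have hWbound : ∀ θ ∈ Set.Ico (0:ℝ) 1, 2 * (1 - F θ) - f θ * ψ θ ≤ W θ := by
    intro θ hθ
    have hθI : θ ∈ Set.Icc (0:ℝ) 1 := ⟨hθ.1, le_of_lt hθ.2⟩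
    have hc : 0 ≤ (1 - F θ) * f' θ / (f θ) ^ 2 := by
      apply div_nonneg
      · exact mul_nonneg (by linarith [hFle1 θ hθI]) (hf'nonneg θ hθ)
      · positivity
    have hA : 0 ≤ 1 - F θ := by linarith [hFle1 θ hθI]
    rw [hW θ, hψderiv θ hθI]
    nlinarith [mul_nonneg hA hc]
  have hθsI : θs ∈ Set.Icc (0:ℝ) 1 := ⟨le_of_lt hθs.1, le_of_lt hθs.2⟩
  have hθsIco : θs ∈ Set.Ico (0:ℝ) 1 := ⟨le_of_lt hθs.1, hθs.2⟩
  have hAθs : 0 < 1 - F θs := by linarith [hFlt1 θs hθsIco]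
  constructor
  · constructor
    · have := hWbound θs hθsIco
      rw [hmonopoly] at this
      linarith
    · linarith
  · -- part (ii)
    intro k hk hWk
    by_contra hle
    push_neg at hle
    have hkI : k ∈ Set.Icc (0:ℝ) 1 := ⟨hk.1, le_of_lt hk.2⟩
    -- ψ is monotone on [0,1]
    have hψcont : ContinuousOn ψ (Set.Icc (0:ℝ) 1) :=
      fun θ hθ => (hψd θ hθ).continuousAt.continuousWithinAt
    have hψmono : StrictMonoOn ψ (Set.Icc (0:ℝ) 1) := by
      refine strictMonoOn_of_deriv_pos (convex_Icc 0 1) hψcont ?_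
      intro x hx
      rw [interior_Icc] at hx
      have hxI : x ∈ Set.Icc (0:ℝ) 1 := ⟨le_of_lt hx.1, le_of_lt hx.2⟩
      rw [hψderiv x hxI]
      have hc : 0 ≤ (1 - F x) * f' x / (f x) ^ 2 := by
        apply div_nonneg
        · exact mul_nonneg (by linarith [hFle1 x hxI]) (hf'nonneg x ⟨le_of_lt hx.1, hx.2⟩)
        · positivity
      linarith
    have hψk : ψ k ≤ 0 := by
      rcases lt_or_eq_of_le hle with h | h
      · have := hψmono hkI hθsI h
        linarith [hmonopoly]
      · rw [h, hmonopoly]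
    have hfk : 0 < f k := hfpos k hkI
    have hFk : F k < 1 := hFlt1 k hk
    have := hWbound k hk
    nlinarith [mul_nonpos_of_nonneg_of_nonpos (le_of_lt hfk) hψk]
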